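/- Let X be a set, G a subgroup of Equiv.Perm X, {α_i : i ∈ I} a complete set of representatives of the orbits of G on X, and for each i ∈ I let π_i ∈ G be such that the point stabilizer G_{α_i} is contained in the centralizer C_G(π_i). Then there is a well-defined map f : X → Equiv.Perm X satisfying f(α_i · g) = g⁻¹ π_i g for all i ∈ I and g ∈ G, and the binary operation x ▷ y := (f(y))(x) makes (X, ▷) a rack whose operator group is contained in G. -/

import Mathlib

/-- A rack: right multiplications are bijections, and self-distributivity holds. -/
def IsRack {X : Type*} (op : X → X → X) : Prop :=
  (∀ y : X, Function.Bijective fun x => op x y) ∧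
  ∀ x y z : X, op (op x y) z = op (op x z) (op y z)

/-- The operator group of a binary operation: the subgroup of `Equiv.Perm X` generated by
the permutations `x ↦ x ▷ y` for `y ∈ X`. -/
def OpGroup {X : Type*} (op : X → X → X) : Subgroup (Equiv.Perm X) :=
  Subgroup.closure {σ : Equiv.Perm X | ∃ y : X, ∀ x : X, σ x = op x y}

/-- Given `G ≤ Equiv.Perm X`, a complete set of orbit representatives `α i`, and elements
`π i ∈ G` with `G_{α i} ≤ C_G(π i)`, there is a well-defined map `f` with
`f(α_i · g) = g⁻¹ π_i g` (in Mathlib's left-application convention,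
`f (g (α i)) = g * π i * g⁻¹`), and `x ▷ y := (f y) x` is a rack whose operator group is
contained in `G`. -/
theorem rack_construction {X : Type*} {I : Type*} (G : Subgroup (Equiv.Perm X))
    (α : I → X) (hα : ∀ x : X, ∃! i : I, ∃ g ∈ G, g (α i) = x)
    (π : I → Equiv.Perm X) (hπG : ∀ i : I, π i ∈ G)
    (hcent : ∀ i : I, ∀ g ∈ G, g (α i) = α i → g * π i = π i * g) :
    ∃ f : X → Equiv.Perm X,
      (∀ i : I, ∀ g ∈ G, f (g (α i)) = g * π i * g⁻¹) ∧
      IsRack (fun x y : X => f y x) ∧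
      OpGroup (fun x y : X => f y x) ≤ G := by
  classical
  choose ix gx hgxG hgxα using fun x => (hα x).exists
  set f : X → Equiv.Perm X := fun x => gx x * π (ix x) * (gx x)⁻¹ with hfdef
  have hfG : ∀ x, f x ∈ G := fun x =>
    mul_mem (mul_mem (hgxG x) (hπG _)) (inv_mem (hgxG x))
  have hf : ∀ i : I, ∀ g ∈ G, f (g (α i)) = g * π i * g⁻¹ := by
    intro i g hg
    set x := g (α i) with hx
    have hix : ix x = i :=
      (hα x).unique ⟨gx x, hgxG x, hgxα x⟩ ⟨g, hg, rfl⟩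
    have hstab : (g⁻¹ * gx x) (α i) = α i := by
      have h1 : gx x (α i) = x := by rw [← hix]; exact hgxα x
      rw [Equiv.Perm.mul_apply, h1, hx]; exact g.symm_apply_apply (α i)
    have hc := hcent i (g⁻¹ * gx x) (mul_mem (inv_mem hg) (hgxG x)) hstab
    have : gx x * π i * (gx x)⁻¹ = g * π i * g⁻¹ := by
      have := congrArg (fun t => g * t * (gx x)⁻¹) hc
      simpa [mul_assoc] using this
    simp only [hfdef, hix]
    exact this
  refine ⟨f, hf, ⟨fun y => (f y).bijective, ?_⟩, ?_⟩
  · intro x y z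
    have key : f (f z y) = f z * f y * (f z)⁻¹ := by
      have hy : y = gx y (α (ix y)) := (hgxα y).symm
      have h1 : f z y = (f z * gx y) (α (ix y)) := by
        conv_lhs => rw [hy]
        simp [Equiv.Perm.mul_apply]
      rw [h1, hf _ _ (mul_mem (hfG z) (hgxG y))]
      have h2 : f y = gx y * π (ix y) * (gx y)⁻¹ := rfl
      rw [h2]
      group
    simp only [key]
    simp [Equiv.Perm.mul_apply]
  · rw [OpGroup, Subgroup.closure_le]
    intro σ hσ
    obtain ⟨y, hy⟩ := hσ
    have : σ = f y := Equiv.ext fun x => hy x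
    rw [this]; exact hfG y
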